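/- Let X be a countably infinite set and let E be a dilation (E(Z) ⊇ Z for every finite Z ⊆ X). If the lexicographic composition L_E preserves path independence over the class C^res of responsive choice functions, then E is monotonic: Z ⊆ Z' implies E(Z) ⊆ E(Z') for all finite Z, Z' ⊆ X. -/

import Mathlib

/-! Common definitions: choice functions on a countably infinite set of items,
lexicographic composition subject to an exclusion function, and the various
properties from the paper. Items form a type `X`; finite subsets of `X` are
`Finset X`; set functions are maps `Finset X → Set X`. -/

open scoped Classical

variable {X : Type*}

/-- A choice function selects a subset of its input. -/
def IsChoice (C : Finset X → Finset X) : Prop := ∀ Y, C Y ⊆ Y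

/-- Lexicographic composition of `C1` and `C2` subject to the exclusion
function `E`:  `Y ↦ C1(Y) ∪ C2(Y \ E(C1(Y)))`. -/
noncomputable def lexComp (E : Finset X → Set X) (C1 C2 : Finset X → Finset X) :
    Finset X → Finset X :=
  fun Y => C1 Y ∪ C2 (Y.filter (fun y => y ∉ E (C1 Y)))

/-- Path independence: `C(Y ∪ Y') = C(C(Y) ∪ C(Y'))`. -/
def PathIndependent (C : Finset X → Finset X) : Prop :=
  ∀ Y Y' : Finset X, C (Y ∪ Y') = C (C Y ∪ C Y')

/-- Substitutes: the rejection function is monotone. -/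
def Substitutes (C : Finset X → Finset X) : Prop :=
  ∀ Y Y' : Finset X, Y ⊆ Y' → Y \ C Y ⊆ Y' \ C Y'

/-- Size monotonicity (law of aggregate demand). -/
def SizeMonotonic (C : Finset X → Finset X) : Prop :=
  ∀ Y Y' : Finset X, Y ⊆ Y' → (C Y).card ≤ (C Y').card

/-- Consistency: `C(Y') ⊆ Y ⊆ Y'` implies `C(Y) = C(Y')`. -/
def Consistent (C : Finset X → Finset X) : Prop :=
  ∀ Y Y' : Finset X, C Y' ⊆ Y → Y ⊆ Y' → C Y = C Y'

/-- The `q` highest-ranked acceptable elements of `Y`, with respect to a linear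
order `r` on `X ∪ {∅}` (modelled as `Option X`, `none` playing the role of the
outside option `∅`): `y` is chosen iff `y ≻ ∅` and fewer than `q` acceptable
elements of `Y` are ranked strictly above `y`. -/
noncomputable def topChoice (r : LinearOrder (Option X)) (q : ℕ) (Y : Finset X) : Finset X :=
  Y.filter (fun y => r.lt none (some y) ∧
    (Y.filter (fun z => r.lt none (some z) ∧ r.lt (some y) (some z))).card < q)

/-- `C` is responsive to the linear order `r` on `X ∪ {∅}` and quota `q`. -/
def ResponsiveWith (r : LinearOrder (Option X)) (q : ℕ) (C : Finset X → Finset X) : Prop :=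
  ∀ Y : Finset X, C Y = topChoice r q Y

/-- Responsive choice functions (the class `C^res`). -/
def Responsive (C : Finset X → Finset X) : Prop :=
  ∃ (r : LinearOrder (Option X)) (q : ℕ), ResponsiveWith r q C

/-- Single-valued responsive choice functions (the class `C^{sv-res}`): quota 1. -/
def SVResponsive (C : Finset X → Finset X) : Prop :=
  ∃ r : LinearOrder (Option X), ResponsiveWith r 1 C

/-- `E` is threshold-linear with cardinal reuse with respect to the parameters
`t ∈ ℕ ∪ {0,∞}`, `K ⊆ X` and the chain `∅ = T^0 ⊆ T^1 ⊆ ⋯ ⊆ T^t ⊆ X \ K`: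
for every finite `Z`, if `|Z| < t` then `E(Z) = (Z \ T^{|Z|}) ∪ K`, and
otherwise `G_E(Z) = E(Z) ∪ Z = X`. -/
def TLCRWith (E : Finset X → Set X) (t : ℕ∞) (K : Set X) (T : ℕ → Set X) : Prop :=
  T 0 = ∅ ∧ (∀ n : ℕ, (n : ℕ∞) < t → T n ⊆ T (n + 1)) ∧
  (∀ n : ℕ, (n : ℕ∞) ≤ t → T n ⊆ Kᶜ) ∧
  ∀ Z : Finset X,
    ((Z.card : ℕ∞) < t → E Z = ((Z : Set X) \ T Z.card) ∪ K) ∧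
    (¬ (Z.card : ℕ∞) < t → E Z ∪ (Z : Set X) = Set.univ)

/-- `E` is threshold-linear with cardinal reuse (for some parameters). -/
def TLCR (E : Finset X → Set X) : Prop :=
  ∃ (t : ℕ∞) (K : Set X) (T : ℕ → Set X), TLCRWith E t K T

/-- A dilation `D` is threshold-linear (with threshold `t`), where `K = D(∅)`:
`D(Z) = Z ∪ K` when `|Z| < t`, and `D(Z) = X` otherwise. -/
def ThresholdLinear (D : Finset X → Set X) : Prop :=
  ∃ t : ℕ∞, ∀ Z : Finset X,
    ((Z.card : ℕ∞) < t → D Z = (Z : Set X) ∪ D ∅) ∧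
    (¬ (Z.card : ℕ∞) < t → D Z = Set.univ)

/-- A set function `F` (valued inside its argument) is cardinal-linear:
there is a weakly increasing sequence `∅ = T^0 ⊆ T^1 ⊆ ⋯` with
`F(Z) = Z ∩ T^{|Z|}` for every finite `Z`. -/
def CardinalLinear (F : Finset X → Set X) : Prop :=
  ∃ T : ℕ → Set X, T 0 = ∅ ∧ Monotone T ∧
    ∀ Z : Finset X, F Z = (Z : Set X) ∩ T Z.card

section Equiv

variable (s : Setoid X)

/-- A finite set is feasible if it contains at most one element of each
equivalence class. -/
def Feasible (Z : Finset X) : Prop :=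
  ∀ x ∈ Z, ∀ z ∈ Z, x ≠ z → ¬ s.r x z

/-- A choice function is many-to-one if it always selects a feasible set. -/
def ManyToOne (C : Finset X → Finset X) : Prop :=
  ∀ Y : Finset X, Feasible s (C Y)

/-- `I_Z`: the union of the equivalence classes of the members of `Z`. -/
def IClass (Z : Finset X) : Set X := {y | ∃ x ∈ Z, s.r y x}

/-- `E` is equivalence-excluding: `Z ∪ E(Z) ⊇ I_Z` for every feasible `Z`. -/
def EquivExcluding (E : Finset X → Set X) : Prop :=
  ∀ Z : Finset X, Feasible s Z → IClass s Z ⊆ (Z : Set X) ∪ E Z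

/-- `Cbar` completes `C`: whenever `Cbar(Y)` is feasible, `Cbar(Y) = C(Y)`. -/
def Completes (Cbar C : Finset X → Finset X) : Prop :=
  ∀ Y : Finset X, Feasible s (Cbar Y) → Cbar Y = C Y

/-- `E` is many-to-one threshold-linear with cardinal reuse with the parameters
`t`, `K`, `{T^n}`: the displayed condition holds for every *feasible* `Z`:
if `Z ∪ K ≠ X` and `|Z| < t` then `E(Z) = (Z \ T^{|Z|}) ∪ K`, and otherwise
`G_E(Z) = X`. -/
def MtoTLCRWith (E : Finset X → Set X) (t : ℕ∞) (K : Set X) (T : ℕ → Set X) : Prop :=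
  T 0 = ∅ ∧ (∀ n : ℕ, (n : ℕ∞) < t → T n ⊆ T (n + 1)) ∧
  (∀ n : ℕ, (n : ℕ∞) ≤ t → T n ⊆ Kᶜ) ∧
  ∀ Z : Finset X, Feasible s Z →
    (((Z : Set X) ∪ K ≠ Set.univ ∧ (Z.card : ℕ∞) < t) →
      E Z = ((Z : Set X) \ T Z.card) ∪ K) ∧
    (¬ ((Z : Set X) ∪ K ≠ Set.univ ∧ (Z.card : ℕ∞) < t) →
      E Z ∪ (Z : Set X) = Set.univ)

end Equiv
/-- Auxiliary: a linear order on `Option X` in which exactly the members of `A`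
are ranked above `none`. -/
lemma exists_auxOrder {X : Type*} [Countable X] (A : Finset X) :
    ∃ r : LinearOrder (Option X), ∀ y : X, r.lt none (some y) ↔ y ∈ A := by
  obtain ⟨f, hf⟩ := exists_injective_nat X
  set g : Option X → ℤ := fun o =>
    match o with
    | none => 0
    | some y => if y ∈ A then (f y : ℤ) + 1 else -((f y : ℤ) + 1)
  have hgpos : ∀ y : X, 0 < g (some y) ↔ y ∈ A := by
    intro y
    simp only [g]
    split_ifs with h
    · simp [h]
    · simp [h]
  have hg : Function.Injective g := by
    intro a b hab
    match a, b with
    | none, none => rfl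
    | none, some y =>
        exfalso
        simp only [g] at hab
        split_ifs at hab <;> omega
    | some y, none =>
        exfalso
        simp only [g] at hab
        split_ifs at hab <;> omega
    | some y, some z =>
        simp only [g] at hab
        split_ifs at hab <;>
          first
          | (congr 1; exact hf (by exact_mod_cast (by omega : (f y : ℤ) = f z)))
          | omega
  refine ⟨LinearOrder.lift' g hg, fun y => ?_⟩
  change g none < g (some y) ↔ y ∈ A
  simpa using hgpos y

/-- Auxiliary: irreflexivity of `r.lt` for an explicit linear order term. -/
lemma auxOrder_lt_irrefl {X : Type*} (r : LinearOrder (Option X)) (a : Option X) :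
    ¬ r.lt a a := by
  intro h
  exact @lt_irrefl _ r.toPreorder a h

/-- Auxiliary: if the acceptable elements are exactly the members of `A` and the
quota is at least `|A|`, then `topChoice` selects exactly the acceptable
elements. -/
lemma topChoice_eq_filter {X : Type*} (r : LinearOrder (Option X)) (A : Finset X)
    (hr : ∀ y : X, r.lt none (some y) ↔ y ∈ A) (q : ℕ) (hq : A.card ≤ q)
    (Y : Finset X) : topChoice r q Y = Y.filter (· ∈ A) := by
  unfold topChoice
  ext y
  simp only [Finset.mem_filter]
  constructor
  · rintro ⟨hy, hacc, -⟩
    exact ⟨hy, (hr y).1 hacc⟩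
  · rintro ⟨hy, hyA⟩
    refine ⟨hy, (hr y).2 hyA, ?_⟩
    have hsub : Y.filter (fun z => r.lt none (some z) ∧ r.lt (some y) (some z))
        ⊆ A.erase y := by
      intro z hz
      simp only [Finset.mem_filter] at hz
      refine Finset.mem_erase.2 ⟨?_, (hr z).1 hz.2.1⟩
      rintro rfl
      exact auxOrder_lt_irrefl r _ hz.2.2
    calc (Y.filter (fun z => r.lt none (some z) ∧ r.lt (some y) (some z))).card
        ≤ (A.erase y).card := Finset.card_le_card hsub
      _ = A.card - 1 := Finset.card_erase_of_mem hyA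
      _ < A.card := Nat.sub_lt (Finset.card_pos.2 ⟨y, hyA⟩) one_pos
      _ ≤ q := hq

/-- **Claim (dilations are monotonic).** If `E` is a dilation and `L_E`
preserves path independence over responsive choice functions, then `E` is
monotonic. -/
theorem dilation_preserving_pi_monotonic
    {X : Type*} [Countable X] [Infinite X] (E : Finset X → Set X)
    (hdil : ∀ Z : Finset X, (Z : Set X) ⊆ E Z)
    (hpres : ∀ C1 C2 : Finset X → Finset X, IsChoice C1 → IsChoice C2 →
      Responsive C1 → Responsive C2 → PathIndependent (lexComp E C1 C2)) :
    ∀ Z Z' : Finset X, Z ⊆ Z' → E Z ⊆ E Z' := by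
  intro Z Z' hZZ' x hxEZ
  by_contra hxEZ'
  have hxZ' : x ∉ Z' := fun h => hxEZ' (hdil Z' h)
  have hxZ : x ∉ Z := fun h => hxZ' (hZZ' h)
  obtain ⟨r1, hr1⟩ := exists_auxOrder Z'
  obtain ⟨r2, hr2⟩ := exists_auxOrder ({x} : Finset X)
  set C1 : Finset X → Finset X := topChoice r1 Z'.card with hC1def
  set C2 : Finset X → Finset X := topChoice r2 1 with hC2def
  have hC1 : ∀ Y, C1 Y = Y.filter (· ∈ Z') :=
    topChoice_eq_filter r1 Z' hr1 Z'.card le_rfl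
  have hC2 : ∀ Y, C2 Y = Y.filter (· ∈ ({x} : Finset X)) :=
    topChoice_eq_filter r2 {x} hr2 1 (by simp)
  have hch1 : IsChoice C1 := fun Y => by rw [hC1]; exact Finset.filter_subset _ _
  have hch2 : IsChoice C2 := fun Y => by rw [hC2]; exact Finset.filter_subset _ _
  have hres1 : Responsive C1 := ⟨r1, Z'.card, fun Y => rfl⟩
  have hres2 : Responsive C2 := ⟨r2, 1, fun Y => rfl⟩
  have hpi := hpres C1 C2 hch1 hch2 hres1 hres2 (Z ∪ {x}) Z'
  have hC2empty : ∀ W : Finset X, x ∉ W → C2 W = ∅ := by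
    intro W hW
    rw [hC2]
    ext z
    simp only [Finset.mem_filter, Finset.mem_singleton, Finset.notMem_empty, iff_false]
    rintro ⟨hz, rfl⟩
    exact hW hz
  have hfilter1 : (Z ∪ {x}).filter (· ∈ Z') = Z := by
    ext z
    simp only [Finset.mem_filter, Finset.mem_union, Finset.mem_singleton]
    constructor
    · rintro ⟨hz | rfl, hz'⟩
      · exact hz
      · exact absurd hz' hxZ'
    · intro hz; exact ⟨Or.inl hz, hZZ' hz⟩
  have hfilter2 : Z'.filter (· ∈ Z') = Z' := by
    ext z; simp [Finset.mem_filter]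
  have hfilter3 : (Z' ∪ {x}).filter (· ∈ Z') = Z' := by
    ext z
    simp only [Finset.mem_filter, Finset.mem_union, Finset.mem_singleton]
    constructor
    · rintro ⟨hz | rfl, hz'⟩
      · exact hz
      · exact absurd hz' hxZ'
    · intro hz; exact ⟨Or.inl hz, hz⟩
  have hL1 : lexComp E C1 C2 (Z ∪ {x}) = Z := by
    unfold lexComp
    rw [hC1, hfilter1, hC2empty, Finset.union_empty]
    intro hx
    simp only [Finset.mem_filter] at hx
    exact hx.2 hxEZ
  have hL2 : lexComp E C1 C2 Z' = Z' := by
    unfold lexComp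
    rw [hC1, hfilter2, hC2empty, Finset.union_empty]
    intro hx
    simp only [Finset.mem_filter] at hx
    exact hxZ' hx.1
  have hunion : Z ∪ {x} ∪ Z' = Z' ∪ {x} := by
    ext z
    simp only [Finset.mem_union, Finset.mem_singleton]
    constructor
    · rintro ((hz | rfl) | hz)
      · exact Or.inl (hZZ' hz)
      · exact Or.inr rfl
      · exact Or.inl hz
    · rintro (hz | rfl)
      · exact Or.inr hz
      · exact Or.inl (Or.inr rfl)
  have hL3 : lexComp E C1 C2 (Z' ∪ {x}) = Z' ∪ {x} := by
    unfold lexComp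
    rw [hC1, hfilter3]
    have hxmem : x ∈ (Z' ∪ {x}).filter (fun y => y ∉ E Z') := by
      exact Finset.mem_filter.2
        ⟨Finset.mem_union_right _ (Finset.mem_singleton_self x), hxEZ'⟩
    have hC2val : C2 ((Z' ∪ {x}).filter (fun y => y ∉ E Z')) = {x} := by
      rw [hC2]
      ext z
      simp only [Finset.mem_filter, Finset.mem_singleton]
      constructor
      · rintro ⟨-, rfl⟩; rfl
      · rintro rfl
        simp only [Finset.mem_filter] at hxmem
        exact ⟨by simpa using hxmem, rfl⟩
    rw [hC2val]
  rw [hunion, hL1, hL2, hL3, Finset.union_comm Z Z', Finset.union_eq_left.2 hZZ', hL2] at hpi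
  have hx' : x ∈ Z' := by
    have hm : x ∈ Z' ∪ {x} := Finset.mem_union_right _ (Finset.mem_singleton_self x)
    rwa [hpi] at hm
  exact hxZ' hx'
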